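/- Let F be a field of characteristic 3, G = T_{3m} with m = 3k+1, and s ∈ FG the sum of all 3-elements of G including the identity, i.e., s = x̂y^{-1} + 1 + x̂y where x̂ = Σ_{i=0}^{m-1} x^i. Then Ann_{FG}(s) = {a⁻ x̂ y^{-1} + a x̂ + a⁺ x̂ y : a⁻, a, a⁺ ∈ F, a⁻ + a + a⁺ = 0}. -/

import Mathlib

/-- Relations of the presentation `T_{3m} = ⟨x, y | x^m = y^3 = 1, y⁻¹xy = x^t⟩`. -/
def T3mRels (m t : ℕ) : Set (FreeGroup (Fin 2)) :=
  {FreeGroup.of 0 ^ m, FreeGroup.of 1 ^ 3,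
   (FreeGroup.of 1)⁻¹ * FreeGroup.of 0 * FreeGroup.of 1 * (FreeGroup.of 0 ^ t)⁻¹}

/-- The group `T_{3m}` given by the presentation `⟨x, y | x^m = y^3 = 1, y⁻¹xy = x^t⟩`. -/
abbrev T3m (m t : ℕ) : Type := PresentedGroup (T3mRels m t)

/-- The generator `x` of `T_{3m}`. -/
def xg (m t : ℕ) : T3m m t := PresentedGroup.of 0

/-- The generator `y` of `T_{3m}`. -/
def yg (m t : ℕ) : T3m m t := PresentedGroup.of 1
namespace T3A

variable {m t : ℕ}

lemma mk_rel_eq_one {r : FreeGroup (Fin 2)} (h : r ∈ T3mRels m t) :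
    PresentedGroup.mk (T3mRels m t) r = 1 := by
  have : r ∈ Subgroup.normalClosure (T3mRels m t) := Subgroup.subset_normalClosure h
  exact (QuotientGroup.eq_one_iff r).mpr this

lemma hxm : (xg m t) ^ m = 1 := by
  have := mk_rel_eq_one (m := m) (t := t) (Or.inl rfl)
  simpa [xg, PresentedGroup.of, map_pow] using this

lemma hy3 : (yg m t) ^ 3 = 1 := by
  have := mk_rel_eq_one (m := m) (t := t) (Or.inr (Or.inl rfl))
  simpa [yg, PresentedGroup.of, map_pow] using this

lemma hconj : (yg m t)⁻¹ * xg m t * yg m t = (xg m t) ^ t := by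
  have := mk_rel_eq_one (m := m) (t := t) (Or.inr (Or.inr rfl))
  simp only [xg, yg, PresentedGroup.of] at *
  rw [map_mul, map_mul, map_mul, map_inv, map_inv, map_pow, mul_inv_eq_one] at this
  exact this


lemma xpow_mod (a : ℕ) : (xg m t) ^ (a % m) = (xg m t) ^ a := by
  conv_rhs => rw [← Nat.div_add_mod a m]
  rw [pow_add, pow_mul, hxm, one_pow, one_mul]

lemma xpow_modeq {a b : ℕ} (h : a ≡ b [MOD m]) : (xg m t) ^ a = (xg m t) ^ b := by
  rw [← xpow_mod a, ← xpow_mod b, h]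

lemma xy_comm (a : ℕ) : (xg m t) ^ a * yg m t = yg m t * (xg m t) ^ (t * a) := by
  have h : xg m t * yg m t = yg m t * (xg m t) ^ t := by
    rw [← hconj (m := m) (t := t)]; group
  induction a with
  | zero => simp
  | succ n ih =>
      rw [pow_succ, mul_assoc, h, ← mul_assoc, ih, mul_assoc, ← pow_add]
      ring_nf

lemma yx_comm (ht : t ^ 3 % m = 1 % m) (a : ℕ) :
    yg m t * (xg m t) ^ a = (xg m t) ^ (t ^ 2 * a) * yg m t := by
  have h := xy_comm (m := m) (t := t) (t ^ 2 * a)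
  rw [h]
  have : (xg m t) ^ (t * (t ^ 2 * a)) = (xg m t) ^ a := by
    apply xpow_modeq
    calc t * (t ^ 2 * a) = t ^ 3 * a := by ring
    _ ≡ 1 * a [MOD m] := Nat.ModEq.mul_right a (by unfold Nat.ModEq; simpa using ht)
    _ = a := one_mul a
  rw [this]

lemma ypow_comm (ht : t ^ 3 % m = 1 % m) (a j : ℕ) :
    (yg m t) ^ j * (xg m t) ^ a = (xg m t) ^ (t ^ (2 * j) * a) * (yg m t) ^ j := by
  induction j generalizing a with
  | zero => simp
  | succ n ih =>
      calc (yg m t)^(n+1) * (xg m t)^a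
          = (yg m t)^n * (yg m t * (xg m t)^a) := by rw [pow_succ, mul_assoc]
        _ = (yg m t)^n * ((xg m t)^(t^2*a) * yg m t) := by rw [yx_comm ht]
        _ = ((yg m t)^n * (xg m t)^(t^2*a)) * yg m t := by rw [mul_assoc]
        _ = (xg m t)^(t^(2*n)*(t^2*a)) * ((yg m t)^n * yg m t) := by rw [ih, mul_assoc]
        _ = (xg m t)^(t^(2*(n+1))*a) * (yg m t)^(n+1) := by
              rw [← pow_succ]; congr 2; ring


section rep
variable (m t : ℕ) (ht : t ^ 3 % m = 1 % m)

lemma tcube (ht : t ^ 3 % m = 1 % m) : ((t : ZMod m)) ^ 3 = 1 := by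
  have : ((t ^ 3 : ℕ) : ZMod m) = ((1 : ℕ) : ZMod m) :=
    (ZMod.natCast_eq_natCast_iff' _ _ _).mpr ht
  push_cast at this
  exact this

/-- `t` as a unit of `ZMod m`. -/
def tu (ht : t ^ 3 % m = 1 % m) : (ZMod m)ˣ :=
  ⟨(t : ZMod m), (t : ZMod m) ^ 2, by rw [← pow_succ']; exact tcube m t ht,
    by rw [← pow_succ]; exact tcube m t ht⟩

/-- The permutation `a ↦ a + 1` of `ZMod m`. -/
def f0 : Equiv.Perm (ZMod m) := Equiv.addLeft 1

/-- The permutation `a ↦ t² * a` of `ZMod m`. -/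
def f1 (ht : t ^ 3 % m = 1 % m) : Equiv.Perm (ZMod m) :=
  MulAction.toPerm ((tu m t ht) ^ 2)

lemma f0_pow (n : ℕ) (a : ZMod m) : ((f0 m) ^ n) a = n + a := by
  induction n with
  | zero => simp
  | succ i ih => rw [pow_succ, Equiv.Perm.mul_apply, f0]; push_cast; simp [ih]; ring

lemma f1_apply (a : ZMod m) : (f1 m t ht) a = (t : ZMod m) ^ 2 * a := by
  simp [f1, tu, Units.smul_def]

lemma f1_inv_apply (a : ZMod m) : (f1 m t ht)⁻¹ a = (t : ZMod m) * a := by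
  have : (f1 m t ht) ((t : ZMod m) * a) = a := by
    rw [f1_apply]
    calc (t : ZMod m) ^ 2 * ((t : ZMod m) * a) = (t : ZMod m) ^ 3 * a := by ring
    _ = a := by rw [tcube m t ht, one_mul]
  calc (f1 m t ht)⁻¹ a = (f1 m t ht)⁻¹ ((f1 m t ht) ((t:ZMod m) * a)) := by rw [this]
  _ = (t : ZMod m) * a := by simp

/-- The representation of `T3m` on `ZMod m`. -/
def Phi (ht : t ^ 3 % m = 1 % m) : T3m m t →* Equiv.Perm (ZMod m) :=
  PresentedGroup.toGroup (f := ![f0 m, f1 m t ht]) (by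
    intro r hr
    rcases hr with h | h | h <;> subst h
    · rw [map_pow]
      simp only [FreeGroup.lift_apply_of]
      ext a
      show ((f0 m) ^ m) a = a
      rw [f0_pow]
      simp
    · rw [map_pow]
      simp only [FreeGroup.lift_apply_of, Matrix.cons_val_one, Matrix.head_cons]
      ext a
      show (((f1 m t ht) ^ 3)) a = a
      rw [pow_succ, pow_succ, pow_one, Equiv.Perm.mul_apply, Equiv.Perm.mul_apply,
        f1_apply, f1_apply, f1_apply]
      calc (t:ZMod m)^2 * ((t:ZMod m)^2 * ((t:ZMod m)^2 * a)) = ((t:ZMod m)^3)^2 * a := by ring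
      _ = a := by rw [tcube m t ht]; simp
    · rw [map_mul, map_mul, map_mul, map_inv, map_inv, map_pow]
      simp only [FreeGroup.lift_apply_of, Matrix.cons_val_one, Matrix.head_cons, Matrix.cons_val_zero]
      rw [mul_inv_eq_one]
      ext a
      simp only [Equiv.Perm.mul_apply]
      rw [f1_apply, f0_pow, f1_inv_apply]
      show (t:ZMod m) * ((f0 m) ((t:ZMod m)^2 * a)) = _
      have : (f0 m) ((t:ZMod m)^2 * a) = (t:ZMod m)^2 * a + 1 := by
        simp [f0]; ring
      rw [this]
      calc (t:ZMod m) * ((t:ZMod m)^2*a+1) = (t:ZMod m)^3 * a + t := by ring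
      _ = (t:ZMod m) + a := by rw [tcube m t ht]; ring)

/-- The representation of `T3m` on `ZMod 3`. -/
def Psi : T3m m t →* Multiplicative (ZMod 3) :=
  PresentedGroup.toGroup (f := ![1, Multiplicative.ofAdd 1]) (by
    intro r hr
    rcases hr with h | h | h <;> subst h
    · rw [map_pow]; simp
    · rw [map_pow]
      simp only [FreeGroup.lift_apply_of]
      show (Multiplicative.ofAdd (1 : ZMod 3)) ^ 3 = 1
      decide
    · rw [map_mul, map_mul, map_mul, map_inv, map_inv, map_pow]
      simp only [FreeGroup.lift_apply_of]
      show (Multiplicative.ofAdd (1 : ZMod 3))⁻¹ * 1 * Multiplicative.ofAdd (1 : ZMod 3)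
          * (1 ^ t)⁻¹ = 1
      group)

lemma Phi_x : Phi m t ht (xg m t) = f0 m := by
  simp [Phi, xg, PresentedGroup.toGroup.of]

lemma Phi_y : Phi m t ht (yg m t) = f1 m t ht := by
  simp [Phi, yg, PresentedGroup.toGroup.of]

lemma Psi_x : Psi m t (xg m t) = 1 := by
  simp [Psi, xg, PresentedGroup.toGroup.of]

lemma Psi_y : Psi m t (yg m t) = Multiplicative.ofAdd 1 := by
  simp [Psi, yg, PresentedGroup.toGroup.of]

lemma Psi_xy (i j : ℕ) :
    Psi m t ((xg m t) ^ i * (yg m t) ^ j) = Multiplicative.ofAdd (j : ZMod 3) := by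
  rw [map_mul, map_pow, map_pow, Psi_x, Psi_y, one_pow, one_mul]
  induction j with
  | zero => simp
  | succ n ih => rw [pow_succ, ih]; push_cast; rfl

lemma Phi_xy (i j : ℕ) :
    Phi m t ht ((xg m t) ^ i * (yg m t) ^ j) 0 = (i : ZMod m) := by
  rw [map_mul, map_pow, map_pow, Phi_x, Phi_y]
  have h1 : ((f1 m t ht) ^ j) 0 = 0 := by
    induction j with
    | zero => rfl
    | succ n ih => rw [pow_succ', Equiv.Perm.mul_apply, f1_apply, ih, mul_zero]
  rw [Equiv.Perm.mul_apply, h1, f0_pow, add_zero]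

lemma distinct (ht : t ^ 3 % m = 1 % m) {i j i' j' : ℕ} (hi : i < m) (hj : j < 3) (hi' : i' < m) (hj' : j' < 3)
    (h : (xg m t) ^ i * (yg m t) ^ j = (xg m t) ^ i' * (yg m t) ^ j') :
    i = i' ∧ j = j' := by
  have hj3 : j = j' := by
    have := congrArg (Psi m t) h
    rw [Psi_xy, Psi_xy] at this
    have := Multiplicative.ofAdd.injective this
    rw [ZMod.natCast_eq_natCast_iff] at this
    have := this.eq_of_lt_of_lt hj hj'
    exact this
  subst hj3
  have hx : (xg m t) ^ i = (xg m t) ^ i' := mul_right_cancel h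
  have := congrArg (fun g => Phi m t ht g 0) (by rw [hx] : (xg m t) ^ i * (yg m t) ^ 0 = (xg m t) ^ i' * (yg m t) ^ 0)
  simp only [Phi_xy] at this
  rw [ZMod.natCast_eq_natCast_iff] at this
  exact ⟨this.eq_of_lt_of_lt hi hi', rfl⟩

end rep

section surj
variable {m t : ℕ}

lemma ypow_mod (a : ℕ) : (yg m t) ^ (a % 3) = (yg m t) ^ a := by
  conv_rhs => rw [← Nat.div_add_mod a 3]
  rw [pow_add, pow_mul, hy3, one_pow, one_mul]

lemma prod_form (ht : t ^ 3 % m = 1 % m) (i j a b : ℕ) :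
    ((xg m t) ^ i * (yg m t) ^ j) * ((xg m t) ^ a * (yg m t) ^ b)
      = (xg m t) ^ (i + t ^ (2 * j) * a) * (yg m t) ^ (j + b) := by
  calc ((xg m t) ^ i * (yg m t) ^ j) * ((xg m t) ^ a * (yg m t) ^ b)
      = (xg m t) ^ i * (((yg m t) ^ j * (xg m t) ^ a) * (yg m t) ^ b) := by
        rw [mul_assoc, mul_assoc]
    _ = (xg m t) ^ i * (((xg m t) ^ (t ^ (2 * j) * a) * (yg m t) ^ j) * (yg m t) ^ b) := by
        rw [ypow_comm ht]
    _ = ((xg m t) ^ i * (xg m t) ^ (t ^ (2 * j) * a)) * ((yg m t) ^ j * (yg m t) ^ b) := by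
        rw [mul_assoc, mul_assoc]
    _ = (xg m t) ^ (i + t ^ (2 * j) * a) * (yg m t) ^ (j + b) := by
        rw [pow_add, pow_add]

lemma surj (ht : t ^ 3 % m = 1 % m) (hm0 : 0 < m) (g : T3m m t) :
    ∃ i j : ℕ, i < m ∧ j < 3 ∧ g = (xg m t) ^ i * (yg m t) ^ j := by
  have hmem : ∀ (i j a b : ℕ),
      ((xg m t) ^ i * (yg m t) ^ j) * ((xg m t) ^ a * (yg m t) ^ b)
        = (xg m t) ^ ((i + t ^ (2 * j) * a) % m) * (yg m t) ^ ((j + b) % 3) := by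
    intro i j a b
    rw [xpow_mod, ypow_mod, prod_form ht]
  let S : Subgroup (T3m m t) :=
    { carrier := {g | ∃ i j : ℕ, i < m ∧ j < 3 ∧ g = (xg m t) ^ i * (yg m t) ^ j}
      one_mem' := ⟨0, 0, hm0, by norm_num, by simp⟩
      mul_mem' := by
        rintro g h ⟨i, j, hi, hj, rfl⟩ ⟨a, b, ha, hb, rfl⟩
        exact ⟨_, _, Nat.mod_lt _ hm0, Nat.mod_lt _ (by norm_num), hmem i j a b⟩
      inv_mem' := by
        rintro g ⟨i, j, hi, hj, rfl⟩
        have hinv : ((xg m t) ^ i * (yg m t) ^ j)⁻¹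
            = ((xg m t) ^ 0 * (yg m t) ^ ((3 - j) % 3))
              * ((xg m t) ^ ((m - i) % m) * (yg m t) ^ 0) := by
          apply inv_eq_of_mul_eq_one_right
          rw [pow_zero, pow_zero, one_mul, mul_one, ypow_mod, xpow_mod]
          calc ((xg m t) ^ i * (yg m t) ^ j) * ((yg m t) ^ (3 - j) * (xg m t) ^ (m - i))
              = (xg m t) ^ i * (((yg m t) ^ j * (yg m t) ^ (3 - j)) * (xg m t) ^ (m - i)) := by
                rw [mul_assoc, mul_assoc]
            _ = (xg m t) ^ i * ((yg m t) ^ 3 * (xg m t) ^ (m - i)) := by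
                rw [← pow_add, Nat.add_sub_cancel' (le_of_lt hj)]
            _ = (xg m t) ^ i * (xg m t) ^ (m - i) := by rw [hy3, one_mul]
            _ = (xg m t) ^ m := by rw [← pow_add, Nat.add_sub_cancel' (le_of_lt hi)]
            _ = 1 := hxm
        rw [hinv, hmem]
        exact ⟨_, _, Nat.mod_lt _ hm0, Nat.mod_lt _ (by norm_num), rfl⟩ }
  have hgen : ∀ g : T3m m t, g ∈ S := by
    intro g
    apply PresentedGroup.generated_by
    intro j
    fin_cases j
    · refine ⟨1 % m, 0, Nat.mod_lt _ hm0, by norm_num, ?_⟩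
      rw [xpow_mod, pow_one, pow_zero, mul_one]; rfl
    · exact ⟨0, 1, hm0, by norm_num, by rw [pow_zero, pow_one, one_mul]; rfl⟩
  exact hgen g

end surj

section alg
variable {m t : ℕ}

/-- `x^(i.val)` for `i : ZMod m`. -/
def xz (m t : ℕ) (i : ZMod m) : T3m m t := (xg m t) ^ i.val

lemma xz_cast [NeZero m] (a : ℕ) : (xg m t) ^ a = xz m t (a : ZMod m) := by
  rw [xz, ZMod.val_natCast, xpow_mod]

lemma xz_mul [NeZero m] (a b : ZMod m) : xz m t a * xz m t b = xz m t (a + b) := by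
  rw [xz, xz, ← pow_add, xz_cast]
  congr 1
  push_cast
  rw [ZMod.natCast_rightInverse a, ZMod.natCast_rightInverse b]

lemma y_xz (ht : t ^ 3 % m = 1 % m) [NeZero m] (a : ZMod m) :
    yg m t * xz m t a = xz m t ((t : ZMod m) ^ 2 * a) * yg m t := by
  rw [xz, yx_comm ht, xz_cast]
  congr 2
  push_cast
  rw [ZMod.natCast_rightInverse a]

lemma xz_y [NeZero m] (a : ZMod m) :
    xz m t a * yg m t = yg m t * xz m t ((t : ZMod m) * a) := by
  rw [xz, xy_comm, xz_cast]
  congr 2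
  push_cast
  rw [ZMod.natCast_rightInverse a]

lemma sum_zmod {β : Type*} [AddCommMonoid β] [NeZero m] (f : ZMod m → β) :
    ∑ i ∈ Finset.range m, f i = ∑ i : ZMod m, f i := by
  refine Finset.sum_nbij' (fun i => (i : ZMod m)) (fun j => j.val) ?_ ?_ ?_ ?_ ?_ <;>
    intro a ha
  · exact Finset.mem_univ _
  · exact Finset.mem_range.mpr (ZMod.val_lt a)
  · exact ZMod.val_cast_of_lt (Finset.mem_range.mp ha)
  · exact ZMod.natCast_rightInverse a
  · rfl

variable (F : Type*) [Field F] [CharP F 3]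

/-- The element `x̂` as a sum over `ZMod m`. -/
noncomputable def Ahat (m t : ℕ) [NeZero m] : MonoidAlgebra F (T3m m t) :=
  ∑ i : ZMod m, MonoidAlgebra.of F (T3m m t) (xz m t i)

lemma Ahat_mul_xz [NeZero m] (a : ZMod m) :
    Ahat F m t * MonoidAlgebra.of F (T3m m t) (xz m t a) = Ahat F m t := by
  rw [Ahat, Finset.sum_mul]
  rw [show (∑ i : ZMod m, MonoidAlgebra.of F (T3m m t) (xz m t i)
        * MonoidAlgebra.of F (T3m m t) (xz m t a))
      = ∑ i : ZMod m, MonoidAlgebra.of F (T3m m t) (xz m t (i + a)) from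
    Finset.sum_congr rfl fun i _ => by rw [← map_mul, xz_mul]]
  exact Equiv.sum_comp (Equiv.addRight a) (fun i => MonoidAlgebra.of F (T3m m t) (xz m t i))

lemma xz_mul_Ahat [NeZero m] (a : ZMod m) :
    MonoidAlgebra.of F (T3m m t) (xz m t a) * Ahat F m t = Ahat F m t := by
  rw [Ahat, Finset.mul_sum]
  rw [show (∑ i : ZMod m, MonoidAlgebra.of F (T3m m t) (xz m t a)
        * MonoidAlgebra.of F (T3m m t) (xz m t i))
      = ∑ i : ZMod m, MonoidAlgebra.of F (T3m m t) (xz m t (a + i)) from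
    Finset.sum_congr rfl fun i _ => by rw [← map_mul, xz_mul]]
  exact Equiv.sum_comp (Equiv.addLeft a) (fun i => MonoidAlgebra.of F (T3m m t) (xz m t i))

lemma cast_m_eq_one {k : ℕ} (hm : m = 3 * k + 1) : ((m : F)) = 1 := by
  subst hm
  push_cast
  rw [show ((3 : F)) = ((3 : ℕ) : F) by norm_num, CharP.cast_eq_zero F 3]
  ring

lemma Ahat_sq [NeZero m] {k : ℕ} (hm : m = 3 * k + 1) :
    Ahat F m t * Ahat F m t = Ahat F m t := by
  nth_rewrite 2 [Ahat]
  rw [Finset.mul_sum]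
  rw [show (∑ i : ZMod m, Ahat F m t * MonoidAlgebra.of F (T3m m t) (xz m t i))
      = ∑ _i : ZMod m, Ahat F m t from Finset.sum_congr rfl fun i _ => Ahat_mul_xz F i]
  rw [Finset.sum_const, Finset.card_univ, ZMod.card]
  rw [← Nat.cast_smul_eq_nsmul F m, cast_m_eq_one F hm, one_smul]

lemma y_Ahat (ht : t ^ 3 % m = 1 % m) [NeZero m] :
    MonoidAlgebra.of F (T3m m t) (yg m t) * Ahat F m t
      = Ahat F m t * MonoidAlgebra.of F (T3m m t) (yg m t) := by
  rw [Ahat, Finset.mul_sum, Finset.sum_mul]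
  rw [show (∑ i : ZMod m, MonoidAlgebra.of F (T3m m t) (yg m t)
        * MonoidAlgebra.of F (T3m m t) (xz m t i))
      = ∑ i : ZMod m, MonoidAlgebra.of F (T3m m t)
          (xz m t ((t : ZMod m) ^ 2 * i) * yg m t) from
    Finset.sum_congr rfl fun i _ => by rw [← map_mul, y_xz ht]]
  rw [show (∑ i : ZMod m, MonoidAlgebra.of F (T3m m t) (xz m t i)
        * MonoidAlgebra.of F (T3m m t) (yg m t))
      = ∑ i : ZMod m, MonoidAlgebra.of F (T3m m t) (xz m t i * yg m t) from
    Finset.sum_congr rfl fun i _ => by rw [← map_mul]]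
  have := Equiv.sum_comp (f1 m t ht)
    (fun i => MonoidAlgebra.of F (T3m m t) (xz m t i * yg m t))
  simp only [f1_apply] at this
  exact this


lemma xz_inv [NeZero m] (a : ZMod m) : (xz m t a)⁻¹ = xz m t (-a) := by
  apply inv_eq_of_mul_eq_one_right
  rw [xz_mul, add_neg_cancel]
  show (xg m t) ^ (0 : ZMod m).val = 1
  rw [ZMod.val_zero, pow_zero]

lemma xzy_pow [NeZero m] (j : ℕ) (a : ZMod m) :
    xz m t a * (yg m t) ^ j = (yg m t) ^ j * xz m t ((t : ZMod m) ^ j * a) := by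
  induction j generalizing a with
  | zero => simp
  | succ n ih =>
      rw [pow_succ, ← mul_assoc, ih, mul_assoc, xz_y, ← mul_assoc, ← pow_succ]
      congr 2
      ring

lemma Ahat_mul_of [NeZero m] (g : T3m m t) :
    Ahat F m t * MonoidAlgebra.of F (T3m m t) g
      = ∑ i : ZMod m, MonoidAlgebra.of F (T3m m t) (xz m t i * g) := by
  rw [Ahat, Finset.sum_mul]
  exact Finset.sum_congr rfl fun i _ => by rw [← map_mul]

lemma xz_injective [NeZero m] (ht : t ^ 3 % m = 1 % m) :
    Function.Injective (xz m t) := by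
  intro a b h
  have h3 : (0 : ℕ) < 3 := by norm_num
  have := distinct (m := m) (t := t) ht (ZMod.val_lt a) h3 (ZMod.val_lt b) h3
    (by rw [pow_zero, mul_one, mul_one]; exact h)
  exact ZMod.val_injective _ this.1

end alg
end T3A

/-- For `F` of characteristic 3 and `G = T_{3m}`, with `s = x̂y⁻¹ + 1 + x̂y` the sum of all
3-elements, `Ann_{FG}(s) = {a⁻x̂y⁻¹ + ax̂ + a⁺x̂y : a⁻ + a + a⁺ = 0}`. -/
theorem ann_s_eq (F : Type*) [Field F] [CharP F 3] (m t k : ℕ) (ht1 : 1 ≤ t)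
    (hm : m = 3 * k + 1) (ht : t ^ 3 % m = 1 % m) (hgcd : Nat.gcd m (t - 1) = 1) :
    letI G := T3m m t
    letI xhat : MonoidAlgebra F G := ∑ i ∈ Finset.range m, MonoidAlgebra.of F G (xg m t ^ i)
    letI s : MonoidAlgebra F G :=
      xhat * MonoidAlgebra.of F G (yg m t)⁻¹ + 1 + xhat * MonoidAlgebra.of F G (yg m t)
    {α : MonoidAlgebra F G | α * s = 0 ∧ s * α = 0}
      = {α : MonoidAlgebra F G | ∃ am a ap : F, am + a + ap = 0 ∧
          α = am • (xhat * MonoidAlgebra.of F G (yg m t)⁻¹) + a • xhat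
              + ap • (xhat * MonoidAlgebra.of F G (yg m t))} := by
  haveI : NeZero m := ⟨by omega⟩
  set X := MonoidAlgebra.of F (T3m m t) with hX
  set A := T3A.Ahat F m t with hA
  have hxhat : (∑ i ∈ Finset.range m, X (xg m t ^ i)) = A := by
    rw [hA, T3A.Ahat, ← T3A.sum_zmod]
    exact Finset.sum_congr rfl fun i _ => by rw [T3A.xz_cast]
  set w := X (yg m t) with hw
  have hyinv : (yg m t)⁻¹ = yg m t ^ 2 := by
    rw [eq_comm]
    exact eq_inv_of_mul_eq_one_left (by rw [← pow_succ]; exact T3A.hy3)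
  have hXyinv : X (yg m t)⁻¹ = w ^ 2 := by rw [hyinv, map_pow]
  have hw3 : w ^ 3 = 1 := by rw [hw, ← map_pow, T3A.hy3, map_one]
  have hcwA : Commute w A := T3A.y_Ahat F ht
  have hA2 : A * A = A := T3A.Ahat_sq F hm
  ext α
  simp only [Set.mem_setOf_eq, hxhat, hXyinv]
  constructor
  · rintro ⟨h1, -⟩
    have hmf : (m : F) = 1 := T3A.cast_m_eq_one F hm
    have hy2inv : ((yg m t) ^ 2)⁻¹ = yg m t :=
      inv_eq_of_mul_eq_one_right (by rw [← pow_succ]; exact T3A.hy3)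
    have hyinv' : (yg m t)⁻¹ = yg m t * yg m t := by rw [hyinv, sq]
    set E : T3m m t → F := fun h => ∑ i : ZMod m, α.coeff (h * T3A.xz m t i) with hE
    have hsum_inv : ∀ h : T3m m t, (∑ i : ZMod m, α.coeff (h * (T3A.xz m t i)⁻¹)) = E h := by
      intro h
      calc (∑ i : ZMod m, α.coeff (h * (T3A.xz m t i)⁻¹))
          = ∑ i : ZMod m, α.coeff (h * T3A.xz m t (-i)) :=
            Finset.sum_congr rfl fun i _ => by rw [T3A.xz_inv]
        _ = E h := by
            have := Equiv.sum_comp (Equiv.neg (ZMod m)) (fun i => α.coeff (h * T3A.xz m t i))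
            simpa [Equiv.neg_apply] using this
    have expand : ∀ g : T3m m t,
        (∑ i : ZMod m, α.coeff (g * (T3A.xz m t i * (yg m t) ^ 2)⁻¹)) + α.coeff g
          + (∑ i : ZMod m, α.coeff (g * (T3A.xz m t i * yg m t)⁻¹)) = 0 := by
      intro g
      have h1g : ((α * (A * w ^ 2 + 1 + A * w) : MonoidAlgebra F (T3m m t))).coeff g = 0 := by
        rw [h1]; rfl
      rw [hA, hw] at h1g
      rw [← map_pow, mul_add, mul_add, mul_one, T3A.Ahat_mul_of, T3A.Ahat_mul_of,
        Finset.mul_sum, Finset.mul_sum] at h1g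
      rw [MonoidAlgebra.coeff_add, MonoidAlgebra.coeff_add, Finsupp.add_apply, Finsupp.add_apply,
        MonoidAlgebra.coeff_sum, MonoidAlgebra.coeff_sum, Finsupp.finset_sum_apply,
        Finsupp.finset_sum_apply] at h1g
      simp only [MonoidAlgebra.of_apply, MonoidAlgebra.mul_single_apply, mul_one] at h1g
      exact h1g
    have key2 : ∀ g : T3m m t, E (g * yg m t) + α.coeff g + E (g * yg m t * yg m t) = 0 := by
      intro g
      have k := expand g
      simp only [mul_inv_rev, hy2inv, hyinv', ← mul_assoc] at k
      rw [hsum_inv, hsum_inv] at k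
      exact k
    have Einv : ∀ (h : T3m m t) (b : ZMod m), E (h * T3A.xz m t b) = E h := by
      intro h b
      calc E (h * T3A.xz m t b) = ∑ i : ZMod m, α.coeff (h * T3A.xz m t (b + i)) :=
            Finset.sum_congr rfl fun i _ => by rw [mul_assoc, T3A.xz_mul]
        _ = E h := Equiv.sum_comp (Equiv.addLeft b) fun i => α.coeff (h * T3A.xz m t i)
    have Ey : ∀ h : T3m m t, E h = -(E (h * yg m t) + E (h * yg m t * yg m t)) := by
      intro h
      have step : ∀ i : ZMod m,
          α.coeff (h * T3A.xz m t i) = -(E (h * yg m t) + E (h * yg m t * yg m t)) := by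
        intro i
        have k2 := key2 (h * T3A.xz m t i)
        rw [mul_assoc h (T3A.xz m t i) (yg m t), T3A.xz_y, ← mul_assoc h (yg m t)] at k2
        rw [mul_assoc (h * yg m t) _ (yg m t), T3A.xz_y,
          ← mul_assoc (h * yg m t) (yg m t)] at k2
        rw [Einv, Einv] at k2
        linear_combination k2
      calc E h = ∑ _i : ZMod m, -(E (h * yg m t) + E (h * yg m t * yg m t)) :=
            Finset.sum_congr rfl fun i _ => step i
        _ = m • -(E (h * yg m t) + E (h * yg m t * yg m t)) := by
            rw [Finset.sum_const, Finset.card_univ, ZMod.card]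
        _ = -(E (h * yg m t) + E (h * yg m t * yg m t)) := by
            rw [← Nat.cast_smul_eq_nsmul F, hmf, one_smul]
    have hαE : ∀ g : T3m m t, α.coeff g = E g := by
      intro g
      have k2 := key2 g
      have ey := Ey g
      linear_combination k2 - ey
    have Ecoset : ∀ (b : ZMod m) (j : ℕ),
        E (T3A.xz m t b * (yg m t) ^ j) = E ((yg m t) ^ j) := by
      intro b j
      rw [T3A.xzy_pow]
      exact Einv _ _
    have hαval : ∀ i j : ℕ, α.coeff (xg m t ^ i * yg m t ^ j) = E ((yg m t) ^ j) := by
      intro i j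
      rw [hαE, T3A.xz_cast (m := m) (t := t) i, Ecoset]
    have hAj : ∀ j : ℕ, j < 3 → ∀ i0 j0 : ℕ, i0 < m → j0 < 3 →
        (T3A.Ahat F m t * X ((yg m t) ^ j)).coeff (xg m t ^ i0 * yg m t ^ j0)
          = if j = j0 then 1 else 0 := by
      intro j hj i0 j0 hi0 hj0
      classical
      rw [T3A.Ahat_mul_of, MonoidAlgebra.coeff_sum, Finsupp.finset_sum_apply]
      by_cases hcase : j = j0
      · subst hcase
        rw [Finset.sum_eq_single ((i0 : ZMod m)), if_pos rfl]
        · rw [MonoidAlgebra.of_apply, MonoidAlgebra.coeff_single, Finsupp.single_apply, if_pos]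
          rw [← T3A.xz_cast]
        · intro b _ hb
          rw [MonoidAlgebra.of_apply, MonoidAlgebra.coeff_single, Finsupp.single_apply, if_neg]
          intro hcontra
          have hd := T3A.distinct (m := m) (t := t) ht (ZMod.val_lt b) hj hi0 hj0 hcontra
          exact hb (by rw [← hd.1, ZMod.natCast_rightInverse b])
        · intro habs
          exact absurd (Finset.mem_univ _) habs
      · rw [if_neg hcase, Finset.sum_eq_zero]
        intro b _
        rw [MonoidAlgebra.of_apply, MonoidAlgebra.coeff_single, Finsupp.single_apply, if_neg]
        intro hcontra
        have hd := T3A.distinct (m := m) (t := t) ht (ZMod.val_lt b) hj hi0 hj0 hcontra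
        exact hcase hd.2
    refine ⟨E (yg m t * yg m t), E (1 : T3m m t), E (yg m t), ?_, ?_⟩
    · have k2 := key2 (1 : T3m m t)
      have h1' := hαE (1 : T3m m t)
      rw [one_mul] at k2
      linear_combination k2 - h1'
    · ext g
      obtain ⟨i0, j0, hi0, hj0, rfl⟩ := T3A.surj ht (by omega) g
      rw [MonoidAlgebra.coeff_add, MonoidAlgebra.coeff_add, MonoidAlgebra.coeff_smul,
        MonoidAlgebra.coeff_smul, MonoidAlgebra.coeff_smul,
        Finsupp.add_apply, Finsupp.add_apply, Finsupp.smul_apply, Finsupp.smul_apply,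
        Finsupp.smul_apply, smul_eq_mul, smul_eq_mul, smul_eq_mul]
      rw [hαval i0 j0]
      rw [hA, hw, ← map_pow]
      have h2 := hAj 2 (by norm_num) i0 j0 hi0 hj0
      have h1' := hAj 1 (by norm_num) i0 j0 hi0 hj0
      have h0 := hAj 0 (by norm_num) i0 j0 hi0 hj0
      rw [pow_one] at h1'
      rw [pow_zero, map_one, mul_one] at h0
      rw [h2, h1', h0]
      interval_cases j0
      · rw [pow_zero]
        norm_num
      · rw [pow_one]
        norm_num
      · rw [show (yg m t) ^ 2 = yg m t * yg m t from sq (yg m t)]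
        norm_num
  · rintro ⟨am, a, ap, hsum, rfl⟩
    set u : MonoidAlgebra F (T3m m t) := 1 + w + w ^ 2 with hu'
    set β : MonoidAlgebra F (T3m m t) := am • w ^ 2 + a • 1 + ap • w with hβ'
    have hw4 : w ^ 4 = w := by
      rw [show (4 : ℕ) = 3 + 1 from rfl, pow_succ, hw3, one_mul]
    have e1 : w * w = w ^ 2 := (sq w).symm
    have e2 : w * w ^ 2 = 1 := by rw [← pow_succ']; exact hw3
    have e3 : w ^ 2 * w = 1 := by rw [← pow_succ]; exact hw3
    have e4 : w ^ 2 * w ^ 2 = w := by rw [← pow_add]; exact hw4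
    have hwu : w * u = u := by
      rw [hu', mul_add, mul_add, mul_one, e1, e2]
      abel
    have hw2u : w ^ 2 * u = u := by
      rw [hu', mul_add, mul_add, mul_one, e3, e4]
      abel
    have hcu : Commute w u :=
      ((Commute.one_right w).add_right (Commute.refl w)).add_right ((Commute.refl w).pow_right 2)
    have huw : u * w = u := by rw [← hcu.eq, hwu]
    have huw2 : u * w ^ 2 = u := by rw [pow_two, ← mul_assoc, huw, huw]
    have hβu : β * u = 0 := by
      rw [hβ', add_mul, add_mul, smul_mul_assoc, smul_mul_assoc, smul_mul_assoc, hw2u, one_mul,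
        hwu, ← add_smul, ← add_smul, hsum, zero_smul]
    have huβ : u * β = 0 := by
      rw [hβ', mul_add, mul_add, mul_smul_comm, mul_smul_comm, mul_smul_comm, huw2, mul_one,
        huw, ← add_smul, ← add_smul, hsum, zero_smul]
    have hβA : β * A = A * β := by
      rw [hβ', add_mul, add_mul, mul_add, mul_add, smul_mul_assoc, smul_mul_assoc,
        smul_mul_assoc, mul_smul_comm, mul_smul_comm, mul_smul_comm, (hcwA.pow_left 2).eq,
        one_mul, mul_one, hcwA.eq]
    have hαβ : am • (A * w ^ 2) + a • A + ap • (A * w) = A * β := by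
      rw [hβ', mul_add, mul_add, mul_smul_comm, mul_smul_comm, mul_smul_comm, mul_one]
    rw [hαβ]
    have hABA : ∀ v : MonoidAlgebra F (T3m m t), A * β * (A * v) = A * (β * v) := by
      intro v
      calc A * β * (A * v) = A * (β * A) * v := by rw [mul_assoc, mul_assoc, mul_assoc]
        _ = A * A * (β * v) := by rw [hβA, ← mul_assoc, ← mul_assoc, mul_assoc (A*A)]
        _ = A * (β * v) := by rw [hA2]
    have hsAB : ∀ v : MonoidAlgebra F (T3m m t), v * A = A * v → A * v * (A * β) = A * (v * β) := by
      intro v hv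
      calc A * v * (A * β) = A * (v * A) * β := by rw [mul_assoc, mul_assoc, mul_assoc]
        _ = A * A * (v * β) := by rw [hv, ← mul_assoc, ← mul_assoc, mul_assoc (A*A)]
        _ = A * (v * β) := by rw [hA2]
    constructor
    · rw [mul_add, mul_add, mul_one, hABA, hABA, ← mul_add, ← mul_add]
      rw [show β * w ^ 2 + β + β * w = β * u from by rw [hu', mul_add, mul_add, mul_one]; abel]
      rw [hβu, mul_zero]
    · rw [add_mul, add_mul, one_mul, hsAB (w ^ 2) (hcwA.pow_left 2).eq, hsAB w hcwA.eq,
        ← mul_add, ← mul_add]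
      rw [show w ^ 2 * β + β + w * β = u * β from by rw [hu', add_mul, add_mul, one_mul]; abel]
      rw [huβ, mul_zero]
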